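/- arXiv:1511.03898 — 2 statements merged into one kernel-verified Lean document; each statement's English description precedes it below -/
import Mathlib

section
/- For every integer k ≥ 1 and every n ∈ ℕ, the quantity m(n) = (n+1)(n+2)⋯(n+k) − n(n−1)⋯(n−k+1) satisfies m(n) ≥ k!. Moreover, if k ≥ 2 then m(n) ≥ k!·(n+1) for every n ∈ ℕ. -/
noncomputable section

open scoped BigOperators ComplexConjugate

local notation "⟪" x ", " y "⟫" => @inner ℂ _ _ x y

/-- The Hilbert space `H = ℓ²(ℕ, ℂ)` of the quantum harmonic oscillator. -/
abbrev H : Type := lp (fun _ : ℕ => ℂ) 2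

/-- The Fock (number) basis vector `|n⟩`. -/
def fock (n : ℕ) : H := lp.single 2 n 1

/-- Coefficientwise action of the annihilation operator `a`:
`(aψ)_n = √(n+1) ψ_{n+1}`. -/
def acoef (ψ : ℕ → ℂ) : ℕ → ℂ := fun n => (Real.sqrt (n + 1) : ℝ) * ψ (n + 1)

/-- Coefficientwise action of the creation operator `a†`:
`(a†ψ)_n = √n ψ_{n-1}` for `n ≥ 1`, and `(a†ψ)_0 = 0`. -/
def adcoef (ψ : ℕ → ℂ) : ℕ → ℂ :=
  fun n => if n = 0 then 0 else (Real.sqrt n : ℝ) * ψ (n - 1)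

/-- Coefficientwise action of `L = a^k − α^k I`. -/
def Lcoef (k : ℕ) (α : ℝ) (ψ : ℕ → ℂ) : ℕ → ℂ :=
  fun n => acoef^[k] ψ n - (α : ℂ) ^ k * ψ n

/-- Coefficientwise action of `L† = (a†)^k − α^k I`. -/
def Ldcoef (k : ℕ) (α : ℝ) (ψ : ℕ → ℂ) : ℕ → ℂ :=
  fun n => adcoef^[k] ψ n - (α : ℂ) ^ k * ψ n

/-- Coefficientwise action of `L†L`. -/
def LdLcoef (k : ℕ) (α : ℝ) (ψ : ℕ → ℂ) : ℕ → ℂ := Ldcoef k α (Lcoef k α ψ)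

/-- `ψ ∈ H_j`, the domain `{ψ : ∑ n^j |ψ_n|² < ∞}` (inside `ℓ²`). -/
def inHdom (j : ℕ) (ψ : ℕ → ℂ) : Prop :=
  Summable (fun n => ‖ψ n‖ ^ 2) ∧ Summable (fun n : ℕ => (n : ℝ) ^ j * ‖ψ n‖ ^ 2)

/-- Falling factorial `n(n−1)⋯(n−k+1)` (zero when `n < k`). -/
def fallR (k n : ℕ) : ℝ := ∏ j ∈ Finset.range k, ((n : ℝ) - j)

/-- Rising product `(n+1)(n+2)⋯(n+k)`. -/
def riseR (k n : ℕ) : ℝ := ∏ j ∈ Finset.Icc 1 k, ((n : ℝ) + j)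

/-- Eigenvalue `m(n)` of the commutator `M = [a^k, (a†)^k]` on `|n⟩`. -/
def mval (k n : ℕ) : ℝ := riseR k n - fallR k n

/-- The vector `L†|m⟩ = √((m+1)⋯(m+k)) |m+k⟩ − α^k |m⟩`. -/
def ldagFock (k : ℕ) (α : ℝ) (m : ℕ) : H :=
  ((Real.sqrt (riseR k m) : ℝ) : ℂ) • fock (m + k) - ((α : ℂ) ^ k) • fock m

/-- The vector `L†L|m⟩`. -/
def ldlFock (k : ℕ) (α : ℝ) (m : ℕ) : H :=
  ((fallR k m + α ^ (2 * k) : ℝ) : ℂ) • fock m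
    - ((α ^ k * Real.sqrt (fallR k m) : ℝ) : ℂ) • fock (m - k)
    - ((α ^ k * Real.sqrt (riseR k m) : ℝ) : ℂ) • fock (m + k)

/-- A bounded operator is a Hermitian trace-class operator (member of `K¹(H)`) when it is
self-adjoint and admits a spectral decomposition `T = ∑ c_μ |e_μ⟩⟨e_μ|` along a Hilbert basis
with absolutely summable real eigenvalues. -/
def IsHermitianTraceClass (T : H →L[ℂ] H) : Prop :=
  IsSelfAdjoint T ∧
    ∃ (e : HilbertBasis ℕ ℂ H) (c : ℕ → ℝ),
      Summable (fun μ => |c μ|) ∧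
      ∀ x : H, T x = ∑' μ, ((c μ : ℂ) * ⟪e μ, x⟫) • e μ

/-- Trace norm `tr|T| = ∑ |c_μ|` of a Hermitian trace-class operator. -/
def traceNorm (T : H →L[ℂ] H) : ℝ :=
  sInf {s | ∃ (e : HilbertBasis ℕ ℂ H) (c : ℕ → ℝ),
    Summable (fun μ => |c μ|) ∧
    (∀ x : H, T x = ∑' μ, ((c μ : ℂ) * ⟪e μ, x⟫) • e μ) ∧
    s = ∑' μ, |c μ|}

/-- Trace of an operator, computed in the Fock basis. -/
def traceOf (T : H →L[ℂ] H) : ℝ := ∑' n, (⟪fock n, T (fock n)⟫).re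

/-- Positive semidefinite bounded operator. -/
def IsPosSemidef (T : H →L[ℂ] H) : Prop :=
  IsSelfAdjoint T ∧ ∀ x : H, 0 ≤ (⟪x, T x⟫).re

/-- Loewner order on Hermitian operators. -/
def opLE (A B : H →L[ℂ] H) : Prop := IsPosSemidef (B - A)

/-- `(g, d)` is a spectral decomposition of `L†L`: a Hilbert basis of eigenvectors `g_μ`,
lying in the domain `H_{2k}`, with nonnegative eigenvalues `d_μ`. -/
def IsSpectralBasis (k : ℕ) (α : ℝ) (g : HilbertBasis ℕ ℂ H) (d : ℕ → ℝ) : Prop :=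
  (∀ μ, 0 ≤ d μ) ∧
    ∀ μ, inHdom (2 * k) (g μ) ∧
      ∀ n, LdLcoef k α (g μ) n = (d μ : ℂ) * (g μ) n

/-- Matrix entry `⟨g_μ| SρS |g_ν⟩ = √(1+d_μ)√(1+d_ν) ⟨g_μ|ρ|g_ν⟩` of `SρS`
in the eigenbasis `g` of `L†L`, where `S = √(I + L†L)`. -/
def SEntry (g : HilbertBasis ℕ ℂ H) (d : ℕ → ℝ) (ρ : H →L[ℂ] H) (μ ν : ℕ) : ℂ :=
  ((Real.sqrt (1 + d μ) * Real.sqrt (1 + d ν) : ℝ) : ℂ) * ⟪g μ, ρ (g ν)⟫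

/-- Membership in `K_L(H) = {ρ ∈ K¹(H) : tr|SρS| < ∞}`: `ρ` is Hermitian trace class and the
operator with matrix `SρS` is Hermitian trace class. -/
def memKL (g : HilbertBasis ℕ ℂ H) (d : ℕ → ℝ) (ρ : H →L[ℂ] H) : Prop :=
  IsHermitianTraceClass ρ ∧
    ∃ T : H →L[ℂ] H, IsHermitianTraceClass T ∧
      ∀ μ ν, ⟪g μ, T (g ν)⟫ = SEntry g d ρ μ ν

/-- The norm `‖ρ‖_L = tr|SρS|` on `K_L(H)`. -/
def Lnorm (g : HilbertBasis ℕ ℂ H) (d : ℕ → ℝ) (ρ : H →L[ℂ] H) : ℝ :=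
  sInf {s | ∃ T : H →L[ℂ] H, IsHermitianTraceClass T ∧
    (∀ μ ν, ⟪g μ, T (g ν)⟫ = SEntry g d ρ μ ν) ∧ s = traceNorm T}

/-- Fock-basis matrix entry `⟨m| 𝔄(ρ) |n⟩` of
`𝔄(ρ) = (L†Lρ + ρL†L)/2 − LρL†` (weak formulation). -/
def Amat (k : ℕ) (α : ℝ) (ρ : H →L[ℂ] H) (m n : ℕ) : ℂ :=
  (1 / 2 : ℂ) * (⟪ldlFock k α m, ρ (fock n)⟫ + ⟪fock m, ρ (ldlFock k α n)⟫)
    - ⟪ldagFock k α m, ρ (ldagFock k α n)⟫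

/-- `ρ` belongs to the domain of the superoperator `𝔄` on `K_L(H)`, with value `A = 𝔄(ρ)`. -/
def inDomA (k : ℕ) (α : ℝ) (g : HilbertBasis ℕ ℂ H) (d : ℕ → ℝ)
    (ρ A : H →L[ℂ] H) : Prop :=
  memKL g d ρ ∧ memKL g d A ∧ ∀ m n, ⟪fock m, A (fock n)⟫ = Amat k α ρ m n

/-- `(ρ, A)` is a `C¹` trajectory of the Lindblad master equation `dρ/dt = −𝔄(ρ)` in `K_L(H)`:
`ρ(t)` lies in the domain of `𝔄` with `A(t) = 𝔄(ρ(t))`, the derivative of `ρ` in the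
`‖·‖_L`-norm equals `−A(t)`, and `t ↦ A(t)` is `‖·‖_L`-continuous. -/
def IsLindbladTrajectory (k : ℕ) (α : ℝ) (g : HilbertBasis ℕ ℂ H) (d : ℕ → ℝ)
    (ρ A : ℝ → (H →L[ℂ] H)) : Prop :=
  (∀ t, 0 ≤ t → inDomA k α g d (ρ t) (A t)) ∧
  (∀ t, 0 ≤ t → Filter.Tendsto
      (fun h : ℝ => Lnorm g d (((1 / h : ℝ) : ℂ) • (ρ (t + h) - ρ t) + A t))
      (nhdsWithin 0 {h : ℝ | h ≠ 0 ∧ 0 ≤ t + h}) (nhds 0)) ∧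
  (∀ t, 0 ≤ t → Filter.Tendsto (fun s => Lnorm g d (A s - A t))
      (nhdsWithin t (Set.Ici 0)) (nhds 0))

/-- The coherent state amplitude `α_m = α e^{2iπm/k}` for `m = 1, …, k` (indexed by `Fin k`). -/
def catAmp (k : ℕ) (α : ℝ) (m : Fin k) : ℂ :=
  (α : ℂ) * Complex.exp (2 * Real.pi * Complex.I * (m.1 + 1) / k)

/-- Coefficients `e^{−|β|²/2} βⁿ/√(n!)` of the coherent state `|β⟩`. -/
def cohCoeff (β : ℂ) : ℕ → ℂ :=
  fun n => ((Real.exp (-‖β‖ ^ 2 / 2) : ℝ) : ℂ) * β ^ n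
    / ((Real.sqrt (n.factorial) : ℝ) : ℂ)

open Classical in
/-- The coherent state `|β⟩ ∈ H`. -/
def coh (β : ℂ) : H :=
  if h : Memℓp (cohCoeff β) 2 then (⟨cohCoeff β, h⟩ : H) else 0

/-- The `k`-dimensional subspace `H_{α,k}` spanned by the coherent states `|α_m⟩`. -/
def catSpan (k : ℕ) (α : ℝ) : Submodule ℂ H :=
  Submodule.span ℂ (Set.range fun m : Fin k => coh (catAmp k α m))

/-- The rank-one operator `|m⟩⟨n|`. -/
def ketbra (m n : ℕ) : H →L[ℂ] H := (innerSL ℂ (fock n)).smulRight (fock m)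

/-- Coefficientwise action of `(a†)^k + a^k`. -/
def xcoef (k : ℕ) (ψ : ℕ → ℂ) : ℕ → ℂ :=
  fun n => adcoef^[k] ψ n + acoef^[k] ψ n

/-- Coefficientwise action of the inverse resolvent
`R_λ^{-1} = (I + λ(N(N−1)⋯(N−k+1) + α^{2k}))^{-1}`. -/
def rinvCoeff (k : ℕ) (α l : ℝ) (ψ : ℕ → ℂ) : ℕ → ℂ :=
  fun n => (((1 + l * (fallR k n + α ^ (2 * k)))⁻¹ : ℝ) : ℂ) * ψ n

/-- Diagonal Fock-matrix entry `⟨n| 𝔏_L(ξ) |n⟩` of the Lindblad generator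
`𝔏_L(ξ) = LξL† − ½L†Lξ − ½ξL†L` (weak formulation). -/
def lindDiag (k : ℕ) (α : ℝ) (ξ : H →L[ℂ] H) (n : ℕ) : ℂ :=
  ⟪ldagFock k α n, ξ (ldagFock k α n)⟫
    - (1 / 2 : ℂ) * ⟪ldlFock k α n, ξ (fock n)⟫
    - (1 / 2 : ℂ) * ⟪fock n, ξ (ldlFock k α n)⟫

/-- The (unnormalized) `k`-legged Schrödinger cat state
`v_ℓ = ∑_{m=1}^k e^{2iπℓm/k} |α_m⟩`. -/
def catVec (k : ℕ) (α : ℝ) (l : ℤ) : H :=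
  ∑ m ∈ Finset.Icc 1 k,
    Complex.exp (2 * Real.pi * Complex.I * l * m / k) •
      coh ((α : ℂ) * Complex.exp (2 * Real.pi * Complex.I * m / k))

/-- The vector `(I + λL†L)/2 |m⟩`. -/
def resFock (k : ℕ) (α l : ℝ) (m : ℕ) : H :=
  (1 / 2 : ℂ) • (fock m + ((l : ℝ) : ℂ) • ldlFock k α m)

/-- Weak (matrix-element) formulation of the Sylvester-type equation
`((I+λL†L)/2)ρ + ρ((I+λL†L)/2) = f + rλ LρL†`. -/
def sylvEq (k : ℕ) (α l r : ℝ) (f ρ : H →L[ℂ] H) : Prop :=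
  ∀ m n, ⟪resFock k α l m, ρ (fock n)⟫ + ⟪fock m, ρ (resFock k α l n)⟫
    = ⟪fock m, f (fock n)⟫ + ((r * l : ℝ) : ℂ) * ⟪ldagFock k α m, ρ (ldagFock k α n)⟫

/-- `m(n)` as an integer: `(n+1)(n+2)⋯(n+k) − n(n−1)⋯(n−k+1)`. -/
def mInt (k n : ℕ) : ℤ :=
  (∏ j ∈ Finset.Icc 1 k, ((n : ℤ) + j)) - ∏ j ∈ Finset.range k, ((n : ℤ) - j)


lemma rise_eq (k n : ℕ) :
    ∏ j ∈ Finset.Icc 1 k, ((n : ℤ) + j) = ((n + 1).ascFactorial k : ℤ) := by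
  induction k with
  | zero => simp
  | succ k ih =>
    rw [Finset.prod_Icc_succ_top (Nat.one_le_iff_ne_zero.mpr (Nat.succ_ne_zero k)), ih,
      Nat.ascFactorial_succ]
    push_cast
    ring

lemma fall_eq (k n : ℕ) :
    ∏ j ∈ Finset.range k, ((n : ℤ) - j) = (n.descFactorial k : ℤ) := by
  rcases le_or_gt k n with h | h
  · induction k with
    | zero => simp
    | succ k ih =>
      rw [Finset.prod_range_succ, ih (le_of_lt h), Nat.descFactorial_succ]
      have : (k : ℤ) ≤ n := by exact_mod_cast le_of_lt h
      push_cast [Nat.le_of_lt h]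
      ring
  · rw [Finset.prod_eq_zero (Finset.mem_range.mpr h) (by simp),
      Nat.descFactorial_eq_zero_iff_lt.mpr h, Nat.cast_zero]

lemma aux_choose (n : ℕ) : ∀ j, 1 ≤ j → n + 1 ≤ (n + j).choose j := by
  intro j hj
  induction j with
  | zero => omega
  | succ j ih =>
    rcases Nat.eq_or_lt_of_le hj with h | h
    · simp [← h]
    · have hj1 : 1 ≤ j := by omega
      have := ih hj1
      calc n + 1 ≤ (n + j).choose j := this
        _ ≤ (n + j).choose j + (n + j).choose (j + 1) := Nat.le_add_right _ _
        _ = (n + (j+1)).choose (j+1) := by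
            rw [← Nat.choose_succ_succ, Nat.add_succ]


/-- For every `k ≥ 1` and `n ∈ ℕ`,
`m(n) = (n+1)⋯(n+k) − n(n−1)⋯(n−k+1) ≥ k!`; and if `k ≥ 2` then `m(n) ≥ k!(n+1)`. -/
theorem mval_lower_bounds (k : ℕ) (hk : 1 ≤ k) :
    (∀ n : ℕ, (k.factorial : ℤ) ≤ mInt k n) ∧
    (2 ≤ k → ∀ n : ℕ, (k.factorial : ℤ) * ((n : ℤ) + 1) ≤ mInt k n) := by
  obtain ⟨k', rfl⟩ : ∃ k', k = k' + 1 := ⟨k - 1, by omega⟩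
  set K := k' + 1 with hK
  have key : ∀ n : ℕ, mInt K n = (K.factorial : ℤ) * ((n + K).choose K - n.choose K) := by
    intro n
    rw [mInt, rise_eq, fall_eq, Nat.ascFactorial_eq_factorial_mul_choose,
      Nat.descFactorial_eq_factorial_mul_choose]
    push_cast
    ring
  have pascal : ∀ n : ℕ, (n + K).choose K = (n + k').choose k' + (n + k').choose K := by
    intro n
    rw [hK, show n + (k' + 1) = (n + k') + 1 by ring, Nat.choose_succ_succ]
  constructor
  · intro n
    rw [key]
    have h1 : n.choose K + 1 ≤ (n + K).choose K := by
      rw [pascal]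
      have h2 : 1 ≤ (n + k').choose k' := Nat.choose_pos (Nat.le_add_left _ _)
      have h3 : n.choose K ≤ (n + k').choose K := Nat.choose_le_choose _ (by omega)
      omega
    have : (1 : ℤ) ≤ ((n + K).choose K : ℤ) - n.choose K := by omega
    nlinarith [Int.ofNat_le.mpr (Nat.one_le_iff_ne_zero.mpr K.factorial_ne_zero)]
  · intro hk2 n
    rw [key]
    have h1 : n.choose K + (n + 1) ≤ (n + K).choose K := by
      rw [pascal]
      have h2 : n + 1 ≤ (n + k').choose k' := aux_choose n k' (by omega)
      have h3 : n.choose K ≤ (n + k').choose K := Nat.choose_le_choose _ (by omega)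
      omega
    have : ((n : ℤ) + 1) ≤ ((n + K).choose K : ℤ) - n.choose K := by omega
    nlinarith [Int.ofNat_le.mpr (Nat.one_le_iff_ne_zero.mpr K.factorial_ne_zero)]


end
end

section
/- For every integer k ≥ 1 and every finitely supported ψ = ∑_n ψ_n|n⟩ ∈ ℓ²(ℕ,ℂ), one has ⟨ψ|((a†)^k + a^k)²|ψ⟩ = ‖((a†)^k + a^k)ψ‖² ≤ 2 ∑_{n≥0} ((n+k)^k + n^k) |ψ_n|². -/
noncomputable section

open scoped BigOperators ComplexConjugate

local notation "⟪" x ", " y "⟫" => @inner ℂ _ _ x y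

/-! ### Auxiliary lemmas -/

section Aux

open Function

lemma riseR_nonneg (k n : ℕ) : 0 ≤ riseR k n := by
  unfold riseR
  exact Finset.prod_nonneg fun j _ => by positivity

lemma riseR_succ_top (k n : ℕ) : riseR (k + 1) n = riseR k n * ((n : ℝ) + (k + 1)) := by
  rw [riseR, Finset.prod_Icc_succ_top (Nat.one_le_iff_ne_zero.mpr (Nat.succ_ne_zero k)),
    ← riseR]
  push_cast; ring

lemma riseR_succ (k n : ℕ) : riseR (k + 1) n = ((n : ℝ) + 1) * riseR k (n + 1) := by
  induction k with
  | zero => simp [riseR]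
  | succ k ih =>
      rw [riseR_succ_top, ih, riseR_succ_top]
      push_cast; ring

lemma riseR_le (k n : ℕ) : riseR k n ≤ ((n : ℝ) + k) ^ k := by
  unfold riseR
  calc ∏ j ∈ Finset.Icc 1 k, ((n : ℝ) + j)
      ≤ ∏ _j ∈ Finset.Icc 1 k, ((n : ℝ) + k) := by
        apply Finset.prod_le_prod (fun j _ => by positivity)
        intro j hj
        have : (j : ℝ) ≤ (k : ℝ) := by
          exact_mod_cast (Finset.mem_Icc.mp hj).2
        linarith
    _ = ((n : ℝ) + k) ^ k := by rw [Finset.prod_const, Nat.card_Icc]; norm_num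

/-- Closed form for the iterated annihilation coefficients. -/
lemma ac_it (k : ℕ) (ψ : ℕ → ℂ) : ∀ n,
    acoef^[k] ψ n = ((Real.sqrt (riseR k n) : ℝ) : ℂ) * ψ (n + k) := by
  induction k with
  | zero => intro n; simp [riseR]
  | succ k ih =>
      intro n
      rw [Function.iterate_succ_apply']
      simp only [acoef]
      rw [ih (n + 1), riseR_succ, Real.sqrt_mul (by positivity)]
      push_cast
      rw [show n + 1 + k = n + (k + 1) by omega]
      ring

/-- The iterated creation coefficients vanish below level `k`. -/
lemma ad_zero (k : ℕ) (ψ : ℕ → ℂ) : ∀ n < k, adcoef^[k] ψ n = 0 := by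
  induction k with
  | zero => omega
  | succ k ih =>
      intro n hn
      rw [Function.iterate_succ_apply']
      simp only [adcoef]
      rcases Nat.eq_zero_or_pos n with h0 | h0
      · simp [h0]
      · have hne : n ≠ 0 := by omega
        simp only [hne, if_false]
        rw [ih (n - 1) (by omega), mul_zero]

/-- Closed form for the iterated creation coefficients. -/
lemma ad_it (k : ℕ) (ψ : ℕ → ℂ) (m : ℕ) :
    adcoef^[k] ψ (m + k) = ((Real.sqrt (riseR k m) : ℝ) : ℂ) * ψ m := by
  induction k with
  | zero => simp [riseR]
  | succ k ih =>
      rw [show m + (k + 1) = (m + k) + 1 by omega, Function.iterate_succ_apply']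
      simp only [adcoef]
      have hne : m + k + 1 ≠ 0 := by omega
      simp only [hne, if_false]
      rw [show m + k + 1 - 1 = m + k by omega, ih, riseR_succ_top,
        Real.sqrt_mul (riseR_nonneg k m)]
      push_cast
      ring

lemma inj_addk (k : ℕ) : Function.Injective (fun m : ℕ => m + k) :=
  fun a b h => by simpa using h

lemma range_addk (k n : ℕ) (h : n ∉ Set.range (fun m : ℕ => m + k)) : n < k := by
  by_contra hc
  exact h ⟨n - k, by show n - k + k = n; omega⟩

lemma supp_ac (k : ℕ) {ψ : ℕ → ℂ} (hψ : (Function.support ψ).Finite) :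
    (Function.support (acoef^[k] ψ)).Finite := by
  apply (hψ.preimage (f := fun n : ℕ => n + k) (inj_addk k).injOn).subset
  intro n hn
  simp only [Set.mem_preimage, Function.mem_support] at hn ⊢
  intro hz
  exact hn (by rw [ac_it, hz, mul_zero])

lemma supp_ad (k : ℕ) {ψ : ℕ → ℂ} (hψ : (Function.support ψ).Finite) :
    (Function.support (adcoef^[k] ψ)).Finite := by
  apply (hψ.image (fun n => n + k)).subset
  intro n hn
  rw [Function.mem_support] at hn
  rcases Nat.lt_or_ge n k with h | h
  · exact absurd (ad_zero k ψ n h) hn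
  · refine ⟨n - k, ?_, by show n - k + k = n; omega⟩
    intro hz
    apply hn
    rw [show n = (n - k) + k by omega, ad_it, hz, mul_zero]

lemma supp_x (k : ℕ) {ψ : ℕ → ℂ} (hψ : (Function.support ψ).Finite) :
    (Function.support (xcoef k ψ)).Finite := by
  apply ((supp_ad k hψ).union (supp_ac k hψ)).subset
  intro n hn
  rw [Function.mem_support, xcoef] at hn
  by_contra hc
  simp only [Set.mem_union, Function.mem_support, not_or, not_not] at hc
  exact hn (by rw [hc.1, hc.2, add_zero])

/-- Adjoint relation: `⟨ψ, a^k φ⟩ = ⟨(a†)^k ψ, φ⟩`. -/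
lemma adjoint_ac (k : ℕ) (ψ φ : ℕ → ℂ) :
    ∑' n, (starRingEnd ℂ) (ψ n) * acoef^[k] φ n
      = ∑' n, (starRingEnd ℂ) (adcoef^[k] ψ n) * φ n := by
  have hsub : Function.support (fun n => (starRingEnd ℂ) (adcoef^[k] ψ n) * φ n)
      ⊆ Set.range (fun m : ℕ => m + k) := by
    intro n hn
    by_contra h
    exact Function.mem_support.mp hn (by simp [ad_zero k ψ n (range_addk k n h)])
  rw [← (inj_addk k).tsum_eq hsub]
  apply tsum_congr
  intro m
  rw [ad_it, ac_it, map_mul, Complex.conj_ofReal]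
  ring

/-- Adjoint relation: `⟨ψ, (a†)^k φ⟩ = ⟨a^k ψ, φ⟩`. -/
lemma adjoint_ad (k : ℕ) (ψ φ : ℕ → ℂ) :
    ∑' n, (starRingEnd ℂ) (ψ n) * adcoef^[k] φ n
      = ∑' n, (starRingEnd ℂ) (acoef^[k] ψ n) * φ n := by
  have hsub : Function.support (fun n => (starRingEnd ℂ) (ψ n) * adcoef^[k] φ n)
      ⊆ Set.range (fun m : ℕ => m + k) := by
    intro n hn
    by_contra h
    exact Function.mem_support.mp hn (by simp [ad_zero k φ n (range_addk k n h)])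
  rw [← (inj_addk k).tsum_eq hsub]
  apply tsum_congr
  intro m
  rw [ad_it, ac_it, map_mul, Complex.conj_ofReal]
  ring

end Aux

section Aux2

open Function

lemma summ_sq {g : ℕ → ℂ} (hg : (Function.support g).Finite) :
    Summable (fun n => ‖g n‖ ^ 2) :=
  summable_of_finite_support (hg.subset fun n hn hz => hn (by simp [hz]))

lemma summ_wt (c : ℕ → ℝ) {ψ : ℕ → ℂ} (hψ : (Function.support ψ).Finite) :
    Summable (fun n => c n * ‖ψ n‖ ^ 2) :=
  summable_of_finite_support (hψ.subset fun n hn hz => hn (by simp [hz]))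

lemma summ_mulr (f : ℕ → ℂ) {g : ℕ → ℂ} (hg : (Function.support g).Finite) :
    Summable (fun n => f n * g n) :=
  summable_of_finite_support (hg.subset fun n hn hz => hn (by simp [hz]))

lemma summ_mull {f : ℕ → ℂ} (g : ℕ → ℂ) (hf : (Function.support f).Finite) :
    Summable (fun n => (starRingEnd ℂ) (f n) * g n) :=
  summable_of_finite_support (hf.subset fun n hn hz => hn (by simp [hz]))

end Aux2

/-- For finitely supported `ψ`,
`⟨ψ|((a†)^k + a^k)²|ψ⟩ = ‖((a†)^k + a^k)ψ‖² ≤ 2 ∑ ((n+k)^k + n^k)|ψ_n|²`. -/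
theorem xop_squared_bound (k : ℕ) (hk : 1 ≤ k)
    (ψ : ℕ → ℂ) (hψ : (Function.support ψ).Finite) :
    ((∑' n, (starRingEnd ℂ) (ψ n) * xcoef k (xcoef k ψ) n)
      = ((∑' n, ‖xcoef k ψ n‖ ^ 2 : ℝ) : ℂ)) ∧
    ((∑' n, ‖xcoef k ψ n‖ ^ 2)
      ≤ 2 * ∑' n : ℕ, (((n : ℝ) + k) ^ k + (n : ℝ) ^ k) * ‖ψ n‖ ^ 2) := by
  have hX : (Function.support (xcoef k ψ)).Finite := supp_x k hψ
  have hac : (Function.support (acoef^[k] ψ)).Finite := supp_ac k hψ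
  have had : (Function.support (adcoef^[k] ψ)).Finite := supp_ad k hψ
  constructor
  · calc (∑' n, (starRingEnd ℂ) (ψ n) * xcoef k (xcoef k ψ) n)
        = ∑' n, ((starRingEnd ℂ) (ψ n) * adcoef^[k] (xcoef k ψ) n
            + (starRingEnd ℂ) (ψ n) * acoef^[k] (xcoef k ψ) n) := by
          apply tsum_congr; intro n; rw [xcoef]; ring
      _ = (∑' n, (starRingEnd ℂ) (ψ n) * adcoef^[k] (xcoef k ψ) n)
            + ∑' n, (starRingEnd ℂ) (ψ n) * acoef^[k] (xcoef k ψ) n :=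
          Summable.tsum_add (summ_mull _ hψ) (summ_mull _ hψ)
      _ = (∑' n, (starRingEnd ℂ) (acoef^[k] ψ n) * xcoef k ψ n)
            + ∑' n, (starRingEnd ℂ) (adcoef^[k] ψ n) * xcoef k ψ n := by
          rw [adjoint_ad, adjoint_ac]
      _ = ∑' n, ((starRingEnd ℂ) (acoef^[k] ψ n) * xcoef k ψ n
            + (starRingEnd ℂ) (adcoef^[k] ψ n) * xcoef k ψ n) :=
          (Summable.tsum_add (summ_mull _ hac) (summ_mull _ had)).symm
      _ = ∑' n, (starRingEnd ℂ) (xcoef k ψ n) * xcoef k ψ n := by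
          apply tsum_congr; intro n
          rw [xcoef, map_add]; ring
      _ = ∑' n, ((‖xcoef k ψ n‖ ^ 2 : ℝ) : ℂ) := by
          apply tsum_congr; intro n
          rw [RCLike.conj_mul]; norm_cast
      _ = ((∑' n, ‖xcoef k ψ n‖ ^ 2 : ℝ) : ℂ) := (Complex.ofReal_tsum _).symm
  · have key_ad : (∑' n, ‖adcoef^[k] ψ n‖ ^ 2)
        ≤ ∑' n : ℕ, ((n : ℝ) + k) ^ k * ‖ψ n‖ ^ 2 := by
      have hsub : Function.support (fun n => ‖adcoef^[k] ψ n‖ ^ 2)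
          ⊆ Set.range (fun m : ℕ => m + k) := by
        intro n hn
        by_contra h
        exact Function.mem_support.mp hn (by simp [ad_zero k ψ n (range_addk k n h)])
      rw [← (inj_addk k).tsum_eq hsub]
      have heq : ∀ m : ℕ, ‖adcoef^[k] ψ (m + k)‖ ^ 2 = riseR k m * ‖ψ m‖ ^ 2 := by
        intro m
        rw [ad_it, norm_mul, mul_pow, Complex.norm_real, Real.norm_eq_abs,
          abs_of_nonneg (Real.sqrt_nonneg _), Real.sq_sqrt (riseR_nonneg k m)]
      apply Summable.tsum_le_tsum
      · intro m
        rw [heq m]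
        exact mul_le_mul_of_nonneg_right (riseR_le k m) (by positivity)
      · refine summable_of_finite_support (hψ.subset (fun m hm => ?_))
        simp only [Function.mem_support] at hm ⊢
        intro hz
        exact hm (by rw [heq m, hz]; simp)
      · exact summ_wt _ hψ
    have key_ac : (∑' n, ‖acoef^[k] ψ n‖ ^ 2)
        ≤ ∑' n : ℕ, (n : ℝ) ^ k * ‖ψ n‖ ^ 2 := by
      have heq : ∀ n : ℕ, ‖acoef^[k] ψ n‖ ^ 2 = riseR k n * ‖ψ (n + k)‖ ^ 2 := by
        intro n
        rw [ac_it, norm_mul, mul_pow, Complex.norm_real, Real.norm_eq_abs,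
          abs_of_nonneg (Real.sqrt_nonneg _), Real.sq_sqrt (riseR_nonneg k n)]
      calc (∑' n, ‖acoef^[k] ψ n‖ ^ 2)
          ≤ ∑' n : ℕ, ((n + k : ℕ) : ℝ) ^ k * ‖ψ (n + k)‖ ^ 2 := by
            apply Summable.tsum_le_tsum
            · intro n
              rw [heq n]
              refine mul_le_mul_of_nonneg_right ?_ (by positivity)
              refine le_trans (riseR_le k n) ?_
              push_cast
              exact le_rfl
            · exact summ_sq hac
            · exact summable_of_finite_support
                (((hψ.preimage (f := fun n : ℕ => n + k) (inj_addk k).injOn)).subset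
                  (fun n hn => by
                    simp only [Set.mem_preimage, Function.mem_support] at hn ⊢
                    intro hz
                    exact hn (by rw [hz]; simp)))
        _ ≤ ∑' n : ℕ, (n : ℝ) ^ k * ‖ψ n‖ ^ 2 := by
            apply Summable.tsum_le_tsum_of_inj (fun m : ℕ => m + k) (inj_addk k)
            · intro c _
              positivity
            · intro n
              push_cast
              exact le_rfl
            · refine summable_of_finite_support
                ((hψ.preimage (f := fun n : ℕ => n + k) (inj_addk k).injOn).subset
                  (fun n hn => ?_))
              simp only [Set.mem_preimage, Function.mem_support] at hn ⊢
              intro hz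
              exact hn (by simp [hz])
            · exact summ_wt _ hψ
    calc (∑' n, ‖xcoef k ψ n‖ ^ 2)
        ≤ ∑' n, (2 * (‖adcoef^[k] ψ n‖ ^ 2 + ‖acoef^[k] ψ n‖ ^ 2)) := by
          apply Summable.tsum_le_tsum
          · intro n
            rw [xcoef]
            have h1 := norm_add_le (adcoef^[k] ψ n) (acoef^[k] ψ n)
            have h2 : ‖adcoef^[k] ψ n + acoef^[k] ψ n‖ ^ 2
                ≤ (‖adcoef^[k] ψ n‖ + ‖acoef^[k] ψ n‖) ^ 2 :=
              pow_le_pow_left₀ (norm_nonneg _) h1 2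
            nlinarith [sq_nonneg (‖adcoef^[k] ψ n‖ - ‖acoef^[k] ψ n‖)]
          · exact summ_sq hX
          · exact (Summable.add (summ_sq had) (summ_sq hac)).mul_left 2
      _ = 2 * ((∑' n, ‖adcoef^[k] ψ n‖ ^ 2) + ∑' n, ‖acoef^[k] ψ n‖ ^ 2) := by
          rw [tsum_mul_left, Summable.tsum_add (summ_sq had) (summ_sq hac)]
      _ ≤ 2 * ((∑' n : ℕ, ((n : ℝ) + k) ^ k * ‖ψ n‖ ^ 2)
            + ∑' n : ℕ, (n : ℝ) ^ k * ‖ψ n‖ ^ 2) := by linarith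
      _ = 2 * ∑' n : ℕ, (((n : ℝ) + k) ^ k + (n : ℝ) ^ k) * ‖ψ n‖ ^ 2 := by
          rw [← Summable.tsum_add (summ_wt _ hψ) (summ_wt _ hψ)]
          congr 1
          apply tsum_congr; intro n; ring


end
end
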